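/- Let γ = (γ₁,γ₂) : ℝ → ℝ² be a C² curve with γ(t + 2π) = γ(t) and γ(t + π) = −γ(t) for all t. Then ∬_{[0,π]²} ω(γ''(t₁),γ(t₂)) · ω(γ'(t₁),γ'(t₂)) dt₁dt₂ = (∫₀^π ω(γ''(t),γ'(t)) dt) · (∫₀^π γ₁(t)γ₂'(t) dt). -/

import Mathlib

open Real

/-- The standard area form (determinant) on `ℝ²`. -/
def omega2 (u v : ℝ × ℝ) : ℝ := u.1 * v.2 - u.2 * v.1

open MeasureTheory intervalIntegral in
private lemma split4' {f g h k : ℝ → ℝ} (A B C D : ℝ)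
    (hf : IntervalIntegrable f volume 0 π)
    (hg : IntervalIntegrable g volume 0 π)
    (hh : IntervalIntegrable h volume 0 π)
    (hk : IntervalIntegrable k volume 0 π) :
    ∫ t in (0:ℝ)..π, (A * f t - B * g t - C * h t + D * k t) =
      A * (∫ t in (0:ℝ)..π, f t) - B * (∫ t in (0:ℝ)..π, g t)
        - C * (∫ t in (0:ℝ)..π, h t) + D * (∫ t in (0:ℝ)..π, k t) := by
  rw [integral_add (((hf.const_mul A).sub (hg.const_mul B)).sub (hh.const_mul C)) (hk.const_mul D),
    integral_sub ((hf.const_mul A).sub (hg.const_mul B)) (hh.const_mul C),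
    integral_sub (hf.const_mul A) (hg.const_mul B),
    intervalIntegral.integral_const_mul, intervalIntegral.integral_const_mul, intervalIntegral.integral_const_mul, intervalIntegral.integral_const_mul]

open MeasureTheory intervalIntegral in
private lemma int_self_deriv_zero {f f' : ℝ → ℝ}
    (hd : ∀ t, HasDerivAt f (f' t) t) (hc : Continuous f')
    (hanti : f π = - f 0) :
    ∫ t in (0:ℝ)..π, f t * f' t = 0 := by
  have h := integral_deriv_mul_eq_sub (u := f) (v := f) (u' := f') (v' := f')
    (fun t _ => hd t) (fun t _ => hd t) (hc.intervalIntegrable 0 π) (hc.intervalIntegrable 0 π)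
  have h2 : ∫ t in (0:ℝ)..π, (f' t * f t + f t * f' t)
      = 2 * ∫ t in (0:ℝ)..π, f t * f' t := by
    rw [← intervalIntegral.integral_const_mul]
    apply integral_congr
    intro t _; ring
  rw [h2, hanti] at h
  nlinarith [h]

open MeasureTheory intervalIntegral in
private lemma int_cross {u v u' v' : ℝ → ℝ}
    (hu : ∀ t, HasDerivAt u (u' t) t) (hv : ∀ t, HasDerivAt v (v' t) t)
    (hu' : Continuous u') (hv' : Continuous v') (hcu : Continuous u) (hcv : Continuous v)
    (hau : u π = -u 0) (hav : v π = -v 0) :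
    ∫ t in (0:ℝ)..π, v t * u' t = - ∫ t in (0:ℝ)..π, u t * v' t := by
  have h := integral_deriv_mul_eq_sub (fun t (_ : t ∈ Set.uIcc (0:ℝ) π) => hu t)
    (fun t _ => hv t) (hu'.intervalIntegrable 0 π) (hv'.intervalIntegrable 0 π)
  have hsplit : ∫ t in (0:ℝ)..π, (u' t * v t + u t * v' t)
      = (∫ t in (0:ℝ)..π, v t * u' t) + ∫ t in (0:ℝ)..π, u t * v' t := by
    rw [← integral_add (f := fun t => v t * u' t) (g := fun t => u t * v' t) ((hcv.mul hu').intervalIntegrable 0 π)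
      ((hcu.mul hv').intervalIntegrable 0 π)]
    apply integral_congr; intro t _; ring
  rw [hsplit, hau, hav] at h
  nlinarith [h]

open MeasureTheory intervalIntegral in
theorem stmt_5 (γ : ℝ → ℝ × ℝ) (hγ : ContDiff ℝ 2 γ)
    (hper : ∀ t : ℝ, γ (t + 2 * π) = γ t)
    (hsym : ∀ t : ℝ, γ (t + π) = -γ t) :
    (∫ t₁ in (0:ℝ)..π, ∫ t₂ in (0:ℝ)..π,
        omega2 (deriv (deriv γ) t₁) (γ t₂) * omega2 (deriv γ t₁) (deriv γ t₂)) =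
      (∫ t in (0:ℝ)..π, omega2 (deriv (deriv γ) t) (deriv γ t)) *
        (∫ t in (0:ℝ)..π, (γ t).1 * (deriv γ t).2) := by
  -- regularity facts
  have hγ' : ContDiff ℝ 1 (deriv γ) :=
    (contDiff_succ_iff_deriv.mp (show ContDiff ℝ (1+1 : WithTop ℕ∞) γ by norm_num; exact hγ)).2.2
  have hd1 : Differentiable ℝ γ := hγ.differentiable two_ne_zero
  have hd2 : Differentiable ℝ (deriv γ) := hγ'.differentiable one_ne_zero
  have hc2 : Continuous (deriv (deriv γ)) := (contDiff_one_iff_deriv.mp hγ').2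
  -- component derivatives
  have hx : ∀ t, HasDerivAt (fun s => (γ s).1) ((deriv γ t).1) t :=
    fun t => ((hd1 t).hasDerivAt).fst
  have hy : ∀ t, HasDerivAt (fun s => (γ s).2) ((deriv γ t).2) t :=
    fun t => ((hd1 t).hasDerivAt).snd
  have hx' : ∀ t, HasDerivAt (fun s => (deriv γ s).1) ((deriv (deriv γ) t).1) t :=
    fun t => ((hd2 t).hasDerivAt).fst
  have hy' : ∀ t, HasDerivAt (fun s => (deriv γ s).2) ((deriv (deriv γ) t).2) t :=
    fun t => ((hd2 t).hasDerivAt).snd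
  -- continuity of components
  have hcx : Continuous fun t => (γ t).1 := (hγ.continuous).fst
  have hcy : Continuous fun t => (γ t).2 := (hγ.continuous).snd
  have hcc : Continuous fun t => (deriv γ t).1 := (hγ'.continuous).fst
  have hcd : Continuous fun t => (deriv γ t).2 := (hγ'.continuous).snd
  have hca : Continuous fun t => (deriv (deriv γ) t).1 := hc2.fst
  have hcb : Continuous fun t => (deriv (deriv γ) t).2 := hc2.snd
  -- antiperiodicity of derivatives
  have hsym' : ∀ t : ℝ, deriv γ (t + π) = - deriv γ t := by
    intro t
    have h1 : deriv (fun s => γ (s + π)) t = deriv γ (t + π) := deriv_comp_add_const γ π t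
    have h2 : (fun s => γ (s + π)) = fun s => -γ s := funext hsym
    rw [h2] at h1
    rw [← h1]; exact deriv.neg
  have hsym'' : ∀ t : ℝ, deriv (deriv γ) (t + π) = - deriv (deriv γ) t := by
    intro t
    have h1 : deriv (fun s => deriv γ (s + π)) t = deriv (deriv γ) (t + π) :=
      deriv_comp_add_const (deriv γ) π t
    have h2 : (fun s => deriv γ (s + π)) = fun s => -deriv γ s := funext hsym'
    rw [h2] at h1
    rw [← h1]; exact deriv.neg
  -- boundary values
  have hbx : (fun t => (γ t).1) π = - (fun t => (γ t).1) 0 := by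
    have h0 := hsym 0; rw [zero_add] at h0
    show (γ π).1 = -(γ 0).1; rw [h0]; rfl
  have hby : (fun t => (γ t).2) π = - (fun t => (γ t).2) 0 := by
    have h0 := hsym 0; rw [zero_add] at h0
    show (γ π).2 = -(γ 0).2; rw [h0]; rfl
  have hbc : (fun t => (deriv γ t).1) π = - (fun t => (deriv γ t).1) 0 := by
    have h0 := hsym' 0; rw [zero_add] at h0
    show (deriv γ π).1 = -(deriv γ 0).1; rw [h0]; rfl
  have hbd : (fun t => (deriv γ t).2) π = - (fun t => (deriv γ t).2) 0 := by
    have h0 := hsym' 0; rw [zero_add] at h0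
    show (deriv γ π).2 = -(deriv γ 0).2; rw [h0]; rfl
  -- the four single integrals in t₂
  have hIyd : (∫ t in (0:ℝ)..π, (γ t).2 * (deriv γ t).2) = 0 :=
    int_self_deriv_zero hy hcd hby
  have hIxc : (∫ t in (0:ℝ)..π, (γ t).1 * (deriv γ t).1) = 0 :=
    int_self_deriv_zero hx hcc hbx
  have hIyc : (∫ t in (0:ℝ)..π, (γ t).2 * (deriv γ t).1)
      = - ∫ t in (0:ℝ)..π, (γ t).1 * (deriv γ t).2 :=
    int_cross hx hy hcc hcd hcx hcy hbx hby
  -- outer-integral single integrals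
  have hJac : (∫ t in (0:ℝ)..π, (deriv (deriv γ) t).1 * (deriv γ t).1) = 0 := by
    rw [integral_congr (g := fun t => (deriv γ t).1 * (deriv (deriv γ) t).1)
      (fun t _ => by ring)]
    exact int_self_deriv_zero hx' hca hbc
  have hJbd : (∫ t in (0:ℝ)..π, (deriv (deriv γ) t).2 * (deriv γ t).2) = 0 := by
    rw [integral_congr (g := fun t => (deriv γ t).2 * (deriv (deriv γ) t).2)
      (fun t _ => by ring)]
    exact int_self_deriv_zero hy' hcb hbd
  simp only [omega2]
  -- separate the inner integral
  have hinner : ∀ t₁ : ℝ,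
      (∫ t₂ in (0:ℝ)..π,
          ((deriv (deriv γ) t₁).1 * (γ t₂).2 - (deriv (deriv γ) t₁).2 * (γ t₂).1) *
            ((deriv γ t₁).1 * (deriv γ t₂).2 - (deriv γ t₁).2 * (deriv γ t₂).1))
      = ((deriv (deriv γ) t₁).1 * (deriv γ t₁).1) * (∫ t in (0:ℝ)..π, (γ t).2 * (deriv γ t).2)
        - ((deriv (deriv γ) t₁).1 * (deriv γ t₁).2) * (∫ t in (0:ℝ)..π, (γ t).2 * (deriv γ t).1)
        - ((deriv (deriv γ) t₁).2 * (deriv γ t₁).1) * (∫ t in (0:ℝ)..π, (γ t).1 * (deriv γ t).2)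
        + ((deriv (deriv γ) t₁).2 * (deriv γ t₁).2) * (∫ t in (0:ℝ)..π, (γ t).1 * (deriv γ t).1) := by
    intro t₁
    rw [← split4' (f := fun t => (γ t).2 * (deriv γ t).2) (g := fun t => (γ t).2 * (deriv γ t).1)
      (h := fun t => (γ t).1 * (deriv γ t).2) (k := fun t => (γ t).1 * (deriv γ t).1) _ _ _ _ ((hcy.mul hcd).intervalIntegrable 0 π)
      ((hcy.mul hcc).intervalIntegrable 0 π) ((hcx.mul hcd).intervalIntegrable 0 π)
      ((hcx.mul hcc).intervalIntegrable 0 π)]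
    apply integral_congr
    intro t _; ring
  rw [integral_congr (fun t₁ (_ : t₁ ∈ Set.uIcc (0:ℝ) π) => hinner t₁)]
  -- separate the outer integral
  rw [integral_congr (g := fun t₁ =>
      (∫ t in (0:ℝ)..π, (γ t).2 * (deriv γ t).2) * ((deriv (deriv γ) t₁).1 * (deriv γ t₁).1)
      - (∫ t in (0:ℝ)..π, (γ t).2 * (deriv γ t).1) * ((deriv (deriv γ) t₁).1 * (deriv γ t₁).2)
      - (∫ t in (0:ℝ)..π, (γ t).1 * (deriv γ t).2) * ((deriv (deriv γ) t₁).2 * (deriv γ t₁).1)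
      + (∫ t in (0:ℝ)..π, (γ t).1 * (deriv γ t).1) * ((deriv (deriv γ) t₁).2 * (deriv γ t₁).2))
    (fun t _ => by ring)]
  rw [split4' (f := fun t => (deriv (deriv γ) t).1 * (deriv γ t).1) (g := fun t => (deriv (deriv γ) t).1 * (deriv γ t).2)
    (h := fun t => (deriv (deriv γ) t).2 * (deriv γ t).1) (k := fun t => (deriv (deriv γ) t).2 * (deriv γ t).2) _ _ _ _ ((hca.mul hcc).intervalIntegrable 0 π)
    ((hca.mul hcd).intervalIntegrable 0 π) ((hcb.mul hcc).intervalIntegrable 0 π)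
    ((hcb.mul hcd).intervalIntegrable 0 π)]
  -- split the RHS integral
  rw [integral_sub (f := fun t => (deriv (deriv γ) t).1 * (deriv γ t).2) (g := fun t => (deriv (deriv γ) t).2 * (deriv γ t).1) ((hca.mul hcd).intervalIntegrable 0 π) ((hcb.mul hcc).intervalIntegrable 0 π)]
  rw [hIyd, hIxc, hIyc, hJac, hJbd]
  ring
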